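/- If < is an HF-ordering of a Steiner triple system M and A ⊆ M is <-closed, then the substructure ⟨A⟩ generated by A under the quasigroup operation is also <-closed. -/

import Mathlib

/-- A Steiner quasigroup operation. -/
def IsSQ {M : Type*} (op : M → M → M) : Prop :=
  (∀ x y, op x y = op y x) ∧ (∀ x, op x x = x) ∧ (∀ x y, op x (op x y) = y)

/-- An HF-ordering of the STS given by a Steiner quasigroup: a strict linear order such that
every element lies in at most one block together with two smaller elements. -/
def IsHFOrderQ {M : Type*} (op : M → M → M) (r : M → M → Prop) : Prop :=
  IsStrictTotalOrder M r ∧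
    ∀ a b₁ b₂ c₁ c₂ : M, b₁ ≠ b₂ → c₁ ≠ c₂ → a = op b₁ b₂ → a = op c₁ c₂ →
      r b₁ a → r b₂ a → r c₁ a → r c₂ a → ({b₁, b₂} : Set M) = {c₁, c₂}

/-- `A` is `<`-closed: if `b ∈ A` lies in a block `{b, b₁, b₂}` with `b₁, b₂ < b`, then
`b₁, b₂ ∈ A`. -/
def IsClosedQ {M : Type*} (op : M → M → M) (r : M → M → Prop) (A : Set M) : Prop :=
  ∀ b ∈ A, ∀ b₁ b₂ : M, b₁ ≠ b₂ → b = op b₁ b₂ → r b₁ b → r b₂ b → b₁ ∈ A ∧ b₂ ∈ A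

/-- The subsystem generated by `A`. -/
def SubGen {M : Type*} (op : M → M → M) (A : Set M) : Set M :=
  ⋂₀ {S : Set M | A ⊆ S ∧ ∀ x ∈ S, ∀ y ∈ S, op x y ∈ S}

namespace HFAux

variable {M : Type*}

/-- Stages of generation. -/
def genSeq (op : M → M → M) (A : Set M) : ℕ → Set M
  | 0 => A
  | n + 1 => genSeq op A n ∪ {z | ∃ x ∈ genSeq op A n, ∃ y ∈ genSeq op A n, z = op x y}

lemma genSeq_mono (op : M → M → M) (A : Set M) {m n : ℕ} (h : m ≤ n) :
    genSeq op A m ⊆ genSeq op A n := by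
  induction n with
  | zero => simp_all
  | succ n ih =>
    rcases Nat.lt_or_ge m (n+1) with h' | h'
    · exact (ih (Nat.lt_succ_iff.mp h')).trans (Set.subset_union_left)
    · have : m = n + 1 := le_antisymm h h'
      subst this; exact subset_rfl

lemma subgen_eq_iUnion (op : M → M → M) (A : Set M) :
    SubGen op A = ⋃ n, genSeq op A n := by
  apply subset_antisymm
  · apply Set.sInter_subset_of_mem
    constructor
    · exact (by exact subset_rfl : genSeq op A 0 ⊆ _).trans (Set.subset_iUnion _ 0)
    · rintro x hx y hy
      obtain ⟨m, hm⟩ := Set.mem_iUnion.mp hx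
      obtain ⟨n, hn⟩ := Set.mem_iUnion.mp hy
      refine Set.mem_iUnion.mpr ⟨max m n + 1, Or.inr ?_⟩
      exact ⟨x, genSeq_mono op A (le_max_left m n) hm,
             y, genSeq_mono op A (le_max_right m n) hn, rfl⟩
  · refine Set.iUnion_subset fun n => ?_
    induction n with
    | zero =>
      intro a ha
      exact Set.mem_sInter.mpr fun S hS => hS.1 ha
    | succ n ih =>
      rintro a (ha | ⟨x, hx, y, hy, rfl⟩)
      · exact ih ha
      · intro S hS
        exact hS.2 x (ih hx S hS) y (ih hy S hS)

lemma sq_cancel {op : M → M → M} (h : IsSQ op) (x y : M) : op (op x y) y = x := by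
  obtain ⟨hc, _, hk⟩ := h
  rw [hc x y, hc (op y x) y]
  exact hk y x

end HFAux

/-- If `<` is an HF-ordering of a Steiner triple system `M` and `A` is `<`-closed, then the
generated substructure `⟨A⟩` is also `<`-closed. -/
theorem closure_of_closed_is_closed {M : Type*} (op : M → M → M) (hSQ : IsSQ op)
    (r : M → M → Prop) (hr : IsHFOrderQ op r) (A : Set M) (hA : IsClosedQ op r A) :
    IsClosedQ op r (SubGen op A) := by
  obtain ⟨hto, hHF⟩ := hr
  have htri : ∀ a b : M, r a b ∨ a = b ∨ r b a := fun a b => by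
    by_cases h1 : r a b
    · exact Or.inl h1
    by_cases h2 : r b a
    · exact Or.inr (Or.inr h2)
    exact Or.inr (Or.inl (hto.trichotomous a b h1 h2))
  have htrans : ∀ {a b c : M}, r a b → r b c → r a c :=
    fun h1 h2 => hto.toIsStrictOrder.toIsTrans.trans _ _ _ h1 h2
  obtain ⟨hc, hi, hk⟩ := hSQ
  -- each stage is closed
  have key : ∀ n, IsClosedQ op r (HFAux.genSeq op A n) := by
    intro n
    induction n with
    | zero => exact hA
    | succ n ih =>
      rintro b hb c₁ c₂ hne heq h1 h2
      -- first: either b ∈ genSeq n, or b = op x y with x,y ∈ genSeq n both < b, x ≠ y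
      have main : b ∈ HFAux.genSeq op A n ∨
          ∃ x ∈ HFAux.genSeq op A n, ∃ y ∈ HFAux.genSeq op A n,
            b = op x y ∧ x ≠ y ∧ r x b ∧ r y b := by
        rcases hb with hb | ⟨x, hx, y, hy, hbxy⟩
        · exact Or.inl hb
        · by_cases hxy : x = y
          · subst hxy; rw [hi] at hbxy; subst hbxy; exact Or.inl hx
          by_cases hbx : b = x
          · subst hbx; exact Or.inl hx
          by_cases hby : b = y
          · subst hby; exact Or.inl hy
          -- key algebraic identities
          have hxid : x = op b y := by rw [hbxy]; exact (HFAux.sq_cancel ⟨hc, hi, hk⟩ x y).symm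
          have hyid : y = op x b := by rw [hbxy]; exact (hk x y).symm
          rcases htri x b with hxb | h | hbx'
          · rcases htri y b with hyb | h | hby'
            · exact Or.inr ⟨x, hx, y, hy, hbxy, hxy, hxb, hyb⟩
            · exact absurd h.symm hby
            · -- y > b, x < b < y : y = op x b, apply ih to y
              have := ih y hy x b (fun h => hbx h.symm) hyid (htrans hxb hby') hby'
              exact Or.inl this.2
          · exact absurd h.symm hbx
          · -- x > b
            rcases htri y x with hyx | h | hxy'
            · -- x = op b y, b ≠ y, b < x, y < x, apply ih to x
              have := ih x hx b y hby hxid hbx' hyx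
              exact Or.inl this.1
            · exact absurd h.symm hxy
            · -- y > x > b : y = op x b, x ≠ b, x < y, b < y
              have := ih y hy x b (fun h => hbx h.symm) hyid hxy' (htrans hbx' hxy')
              exact Or.inl this.2
      rcases main with hbn | ⟨x, hx, y, hy, hbxy, hxy, hxb, hyb⟩
      · have := ih b hbn c₁ c₂ hne heq h1 h2
        exact ⟨Or.inl this.1, Or.inl this.2⟩
      · have hset := hHF b x y c₁ c₂ hxy hne hbxy heq hxb hyb h1 h2
        have hc1 : c₁ ∈ ({x, y} : Set M) := by rw [hset]; exact Or.inl rfl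
        have hc2 : c₂ ∈ ({x, y} : Set M) := by rw [hset]; exact Or.inr rfl
        constructor
        · rcases hc1 with h | h <;> subst h
          · exact Or.inl hx
          · exact Or.inl hy
        · rcases hc2 with h | h <;> subst h
          · exact Or.inl hx
          · exact Or.inl hy
  rw [HFAux.subgen_eq_iUnion]
  rintro b hb c₁ c₂ hne heq h1 h2
  obtain ⟨n, hn⟩ := Set.mem_iUnion.mp hb
  have := key n b hn c₁ c₂ hne heq h1 h2
  exact ⟨Set.mem_iUnion.mpr ⟨n, this.1⟩, Set.mem_iUnion.mpr ⟨n, this.2⟩⟩
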